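/- Fix a finite set V and a real number p with 1 ≤ p < ∞, and consider the symmetric monoidal lattice ([0, ∞], ≤, +_p, 0). The graph distance δ_{+_p} is an extended metric on the set of [0, ∞]-graphs with vertex set V: for all G, G', G'' : V × V → [0, ∞], (1) δ_{+_p}(G, G') = 0 if and only if G = G'; (2) δ_{+_p}(G, G') = δ_{+_p}(G', G); (3) δ_{+_p}(G, G') ≤ δ_{+_p}(G, G'') + δ_{+_p}(G'', G'), where + is ordinary extended-real addition. -/

import Mathlib

open scoped ENNReal

/-- The `p`-sum `a +_p b = (a^p + b^p)^{1/p}` on the extended nonnegative reals. -/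
noncomputable def psum (p : ℝ) (a b : ℝ≥0∞) : ℝ≥0∞ := (a ^ p + b ^ p) ^ (1 / p)

/-- The left adjoint `λ_t(s) = inf {c : s ≤ t +_p c}` of `c ↦ t +_p c`. -/
noncomputable def lamP (p : ℝ) (t s : ℝ≥0∞) : ℝ≥0∞ := sInf {c : ℝ≥0∞ | s ≤ psum p t c}

/-- The directed graph distance `δ⃗_{+_p}(G, G') = sup_{v,v'} λ_{G(v,v')}(G'(v,v'))`. -/
noncomputable def dirDistP (p : ℝ) {V : Type} (G G' : V → V → ℝ≥0∞) : ℝ≥0∞ :=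
  ⨆ v : V, ⨆ v' : V, lamP p (G v v') (G' v v')

/-- The graph distance `δ_{+_p}(G, G') = sup {δ⃗_{+_p}(G, G'), δ⃗_{+_p}(G', G)}`. -/
noncomputable def graphDistP (p : ℝ) {V : Type} (G G' : V → V → ℝ≥0∞) : ℝ≥0∞ :=
  dirDistP p G G' ⊔ dirDistP p G' G

lemma le_psum_iff {p : ℝ} (hp : 0 < p) {s t c : ℝ≥0∞} :
    s ≤ psum p t c ↔ (s ^ p - t ^ p) ^ (1 / p) ≤ c := by
  have hne : p ≠ 0 := hp.ne'
  unfold psum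
  rw [← ENNReal.rpow_le_rpow_iff hp (x := s), one_div,
    ENNReal.rpow_inv_rpow hne, ← tsub_le_iff_left,
    ← ENNReal.rpow_le_rpow_iff (one_div_pos.mpr hp) (y := c ^ p), one_div,
    ENNReal.rpow_rpow_inv hne]

lemma lamP_eq {p : ℝ} (hp : 0 < p) (t s : ℝ≥0∞) :
    lamP p t s = (s ^ p - t ^ p) ^ (1 / p) := by
  unfold lamP
  have : {c : ℝ≥0∞ | s ≤ psum p t c} = Set.Ici ((s ^ p - t ^ p) ^ (1 / p)) := by
    ext c; exact le_psum_iff hp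
  rw [this, csInf_Ici]

lemma lamP_eq_zero_iff {p : ℝ} (hp : 0 < p) {t s : ℝ≥0∞} :
    lamP p t s = 0 ↔ s ≤ t := by
  rw [lamP_eq hp, ENNReal.rpow_eq_zero_iff]
  constructor
  · rintro (⟨h, -⟩ | ⟨h, h'⟩)
    · rw [tsub_eq_zero_iff_le] at h
      exact (ENNReal.rpow_le_rpow_iff hp).mp h
    · exact absurd h' (one_div_pos.mpr hp).not_gt
  · intro h
    exact Or.inl ⟨tsub_eq_zero_of_le ((ENNReal.rpow_le_rpow_iff hp).mpr h),
      one_div_pos.mpr hp⟩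

lemma lamP_triangle {p : ℝ} (hp : 1 ≤ p) (a b c : ℝ≥0∞) :
    lamP p a c ≤ lamP p a b + lamP p b c := by
  have hp0 : 0 < p := lt_of_lt_of_le one_pos hp
  rw [lamP_eq hp0, lamP_eq hp0, lamP_eq hp0]
  calc (c ^ p - a ^ p) ^ (1 / p)
      ≤ ((c ^ p - b ^ p) + (b ^ p - a ^ p)) ^ (1 / p) := by
        apply ENNReal.rpow_le_rpow _ (by positivity)
        exact tsub_le_tsub_add_tsub
    _ ≤ (c ^ p - b ^ p) ^ (1 / p) + (b ^ p - a ^ p) ^ (1 / p) :=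
        ENNReal.rpow_add_le_add_rpow _ _ (by positivity)
          (by rw [div_le_one hp0]; exact hp)
    _ = (b ^ p - a ^ p) ^ (1 / p) + (c ^ p - b ^ p) ^ (1 / p) := add_comm _ _

lemma dirDistP_triangle {p : ℝ} (hp : 1 ≤ p) {V : Type} (G G' G'' : V → V → ℝ≥0∞) :
    dirDistP p G G' ≤ dirDistP p G G'' + dirDistP p G'' G' := by
  apply iSup_le; intro v; apply iSup_le; intro v'
  calc lamP p (G v v') (G' v v')
      ≤ lamP p (G v v') (G'' v v') + lamP p (G'' v v') (G' v v') :=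
        lamP_triangle hp _ _ _
    _ ≤ dirDistP p G G'' + dirDistP p G'' G' := by
        gcongr
        · exact le_iSup₂ (f := fun a b => lamP p (G a b) (G'' a b)) v v'
        · exact le_iSup₂ (f := fun a b => lamP p (G'' a b) (G' a b)) v v'

/-- For `1 ≤ p < ∞`, the graph distance `δ_{+_p}` is an extended metric on
the set of `[0, ∞]`-graphs on a finite vertex set `V`: it vanishes exactly on equal
graphs, it is symmetric, and it satisfies the triangle inequality with respect to
ordinary extended-real addition. -/
theorem graphDistP_extended_metric (p : ℝ) (hp : 1 ≤ p) {V : Type} [Fintype V]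
    (G G' G'' : V → V → ℝ≥0∞) :
    (graphDistP p G G' = 0 ↔ G = G') ∧
    (graphDistP p G G' = graphDistP p G' G) ∧
    (graphDistP p G G' ≤ graphDistP p G G'' + graphDistP p G'' G') := by
  have hp0 : 0 < p := lt_of_lt_of_le one_pos hp
  refine ⟨?_, ?_, ?_⟩
  · unfold graphDistP dirDistP
    simp only [ENNReal.max_eq_zero_iff, ENNReal.iSup_eq_zero, lamP_eq_zero_iff hp0]
    constructor
    · rintro ⟨h1, h2⟩
      funext v v'
      exact le_antisymm (h2 v v') (h1 v v')
    · rintro rfl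
      exact ⟨fun v v' => le_rfl, fun v v' => le_rfl⟩
  · exact sup_comm _ _
  · apply sup_le
    · calc dirDistP p G G' ≤ dirDistP p G G'' + dirDistP p G'' G' :=
            dirDistP_triangle hp _ _ _
        _ ≤ graphDistP p G G'' + graphDistP p G'' G' := by
            gcongr <;> exact le_sup_left
    · calc dirDistP p G' G ≤ dirDistP p G' G'' + dirDistP p G'' G :=
            dirDistP_triangle hp _ _ _
        _ ≤ graphDistP p G G'' + graphDistP p G'' G' := by
            rw [add_comm]; gcongr <;> exact le_sup_right
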